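/- Let f : B^n → ℝ be C^{d+1}, let ω(t) = (ω_1(t),...,ω_n(t)) be a polynomial curve with each ω_i of degree at most s and ω([-1,1]) ⊂ B^n, and let g(t) = f(ω(t)). Then in the Faà di Bruno expansion of g^{(d+1)}(t), all terms with |α| ≤ ⌊(d+1)/(s+1)⌋ vanish identically; that is, g^{(d+1)}(t) = Σ_{|α| = η}^{d+1} f^{(α)}(ω(t)) Σ_{β} c_{α,β}(Dω_α)^β, where η = ⌊(d+1)/(s+1)⌋ + 1. -/

import Mathlib

/-- First-order partial derivative of `f` in the `i`-th coordinate direction. -/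
noncomputable def pderivE (n : ℕ) (i : Fin n) (f : EuclideanSpace ℝ (Fin n) → ℝ) :
    EuclideanSpace ℝ (Fin n) → ℝ :=
  fun x => fderiv ℝ f x (EuclideanSpace.single i 1)

/-- Higher-order partial derivative `∂^α f` for a multi-index `α : Fin n → ℕ`. -/
noncomputable def pderivMulti (n : ℕ) (α : Fin n → ℕ) (f : EuclideanSpace ℝ (Fin n) → ℝ) :
    EuclideanSpace ℝ (Fin n) → ℝ :=
  (List.finRange n).foldr (fun i g => (pderivE n i)^[α i] g) f

/-- For a polynomial curve `ω` of degree ≤ `s` with `ω([-1,1]) ⊆ Bⁿ` and a `C^{d+1}`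
function `f`, in the Faà di Bruno expansion of `(f ∘ ω)^{(d+1)}` all terms with
`|α| ≤ ⌊(d+1)/(s+1)⌋` vanish: the expansion only involves multi-indices `α` with
`⌊(d+1)/(s+1)⌋ + 1 ≤ |α| ≤ d + 1`. -/
noncomputable def Dl (n : ℕ) (L : List (Fin n)) (f : EuclideanSpace ℝ (Fin n) → ℝ) :
    EuclideanSpace ℝ (Fin n) → ℝ :=
  L.foldr (pderivE n) f

lemma contDiff_pderivE {n : ℕ} {i : Fin n} {f : EuclideanSpace ℝ (Fin n) → ℝ} {m : ℕ}
    (h : ContDiff ℝ ((m + 1 : ℕ) : WithTop ℕ∞) f) : ContDiff ℝ m (pderivE n i f) := by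
  have h1 : ContDiff ℝ m (fderiv ℝ f) := by
    apply h.fderiv_right
    norm_cast
  exact h1.clm_apply contDiff_const

lemma contDiff_Dl {n : ℕ} (L : List (Fin n)) {f : EuclideanSpace ℝ (Fin n) → ℝ} {m : ℕ}
    (h : ContDiff ℝ ((m + L.length : ℕ) : WithTop ℕ∞) f) : ContDiff ℝ m (Dl n L f) := by
  induction L generalizing m with
  | nil => simpa [Dl] using h
  | cons i L ih =>
      have h2 : ContDiff ℝ ((m + 1 : ℕ) : WithTop ℕ∞) (Dl n L f) := by
        apply ih
        have e : (m + 1) + L.length = m + (i :: L).length := by simp; omega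
        rw [e]; exact h
      exact contDiff_pderivE h2

lemma pderivE_comm {n : ℕ} {i i' : Fin n} {g : EuclideanSpace ℝ (Fin n) → ℝ}
    (h : ContDiff ℝ 2 g) : pderivE n i (pderivE n i' g) = pderivE n i' (pderivE n i g) := by
  funext x
  have hdg : Differentiable ℝ (fderiv ℝ g) := by
    have : ContDiff ℝ 1 (fderiv ℝ g) := h.fderiv_right (by norm_num)
    exact this.differentiable (by norm_num)
  have key : ∀ a b : Fin n, pderivE n a (pderivE n b g) x
      = fderiv ℝ (fderiv ℝ g) x (EuclideanSpace.single a 1) (EuclideanSpace.single b 1) := by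
    intro a b
    show fderiv ℝ (fun y => fderiv ℝ g y (EuclideanSpace.single b 1)) x (EuclideanSpace.single a 1) = _
    rw [fderiv_clm_apply (hdg x) (differentiableAt_const _)]
    simp
  rw [key, key]
  have hsymm : IsSymmSndFDerivAt ℝ g x := by
    apply ContDiffAt.isSymmSndFDerivAt h.contDiffAt
    norm_num
  exact hsymm _ _

lemma Dl_perm {n : ℕ} {L₁ L₂ : List (Fin n)} (hp : L₁.Perm L₂)
    {f : EuclideanSpace ℝ (Fin n) → ℝ} :
    ContDiff ℝ ((L₁.length : ℕ) : WithTop ℕ∞) f → Dl n L₁ f = Dl n L₂ f := by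
  induction hp with
  | nil => intro _; rfl
  | cons a h ih =>
      intro hf
      show pderivE n a (Dl n _ f) = pderivE n a (Dl n _ f)
      rw [ih (hf.of_le (by exact_mod_cast Nat.le_succ _))]
  | swap x y l =>
      intro hf
      show pderivE n y (pderivE n x (Dl n l f)) = pderivE n x (pderivE n y (Dl n l f))
      have hg : ContDiff ℝ (2 : ℕ) (Dl n l f) := by
        apply contDiff_Dl
        have : (2 + l.length : ℕ) = (y :: x :: l).length := by simp; omega
        rw [this]; exact hf
      exact pderivE_comm (by exact_mod_cast hg)
  | trans h₁ h₂ ih₁ ih₂ =>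
      intro hf
      rw [ih₁ hf, ih₂ (by rwa [← h₁.length_eq])]

def listOf (n : ℕ) (α : Fin n → ℕ) : List (Fin n) :=
  (List.finRange n).flatMap fun i => List.replicate (α i) i

lemma Dl_append {n : ℕ} (L₁ L₂ : List (Fin n)) (f : EuclideanSpace ℝ (Fin n) → ℝ) :
    Dl n (L₁ ++ L₂) f = Dl n L₁ (Dl n L₂ f) := by
  simp [Dl, List.foldr_append]

lemma Dl_replicate {n : ℕ} (k : ℕ) (i : Fin n) (g : EuclideanSpace ℝ (Fin n) → ℝ) :
    Dl n (List.replicate k i) g = (pderivE n i)^[k] g := by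
  induction k with
  | zero => rfl
  | succ k ih =>
      show pderivE n i (Dl n (List.replicate k i) g) = _
      rw [ih, Function.iterate_succ_apply']

lemma pderivMulti_eq_Dl {n : ℕ} (α : Fin n → ℕ) (f : EuclideanSpace ℝ (Fin n) → ℝ) :
    pderivMulti n α f = Dl n (listOf n α) f := by
  show (List.finRange n).foldr _ f = _
  unfold listOf
  induction List.finRange n with
  | nil => rfl
  | cons i L ih =>
      show (pderivE n i)^[α i] (L.foldr _ f) = Dl n (List.replicate (α i) i ++ _) f
      rw [Dl_append, ih, Dl_replicate, List.flatMap]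

lemma length_listOf {n : ℕ} (α : Fin n → ℕ) : (listOf n α).length = ∑ i, α i := by
  simp only [listOf, List.length_flatMap, List.length_replicate, Fin.sum_univ_def]

lemma flatMap_congr {β γ : Type*} {L : List β} {g g' : β → List γ}
    (h : ∀ j ∈ L, g j = g' j) : L.flatMap g = L.flatMap g' := by
  induction L with
  | nil => rfl
  | cons a L ih =>
      simp only [List.flatMap_cons]
      rw [h a (by simp), ih (fun j hj => h j (by simp [hj]))]

lemma perm_listOf_aux {n : ℕ} (α : Fin n → ℕ) (i : Fin n) (L : List (Fin n))
    (hL : L.Nodup) (hi : i ∈ L) :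
    (L.flatMap fun j => List.replicate (Function.update α i (α i + 1) j) j).Perm
      (i :: L.flatMap fun j => List.replicate (α j) j) := by
  induction L with
  | nil => simp at hi
  | cons a L ih =>
      rcases List.nodup_cons.mp hL with ⟨ha, hL'⟩
      simp only [List.flatMap_cons]
      rcases List.mem_cons.mp hi with rfl | hi'
      · rw [Function.update_self]
        rw [flatMap_congr (g' := fun j => List.replicate (α j) j)
          (fun j hj => by rw [Function.update_of_ne]; rintro rfl; exact ha hj)]
        simp [List.replicate_succ]
      · rw [Function.update_of_ne (by rintro rfl; exact ha hi') ]
        have := (ih hL' hi').append_left (List.replicate (α a) a)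
        refine this.trans ?_
        exact List.perm_middle
lemma sum_update_succ {n : ℕ} (α : Fin n → ℕ) (i : Fin n) :
    (∑ j, Function.update α i (α i + 1) j) = (∑ j, α j) + 1 := by
  rw [Finset.sum_update_of_mem (Finset.mem_univ i), Finset.sdiff_singleton_eq_erase]
  rw [← Finset.add_sum_erase _ α (Finset.mem_univ i)]
  omega

lemma pderivMulti_succ {n : ℕ} {α : Fin n → ℕ} {f : EuclideanSpace ℝ (Fin n) → ℝ} (i : Fin n)
    (hf : ContDiff ℝ (((∑ j, α j) + 1 : ℕ) : WithTop ℕ∞) f) :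
    pderivMulti n (Function.update α i (α i + 1)) f = pderivE n i (pderivMulti n α f) := by
  rw [pderivMulti_eq_Dl, pderivMulti_eq_Dl]
  have h1 : pderivE n i (Dl n (listOf n α) f) = Dl n (i :: listOf n α) f := rfl
  rw [h1]
  apply Dl_perm
  · exact perm_listOf_aux α i _ (List.nodup_finRange n) (List.mem_finRange i)
  · rw [length_listOf, sum_update_succ]
    exact hf

lemma contDiff_pderivMulti {n : ℕ} {α : Fin n → ℕ} {f : EuclideanSpace ℝ (Fin n) → ℝ} {m : ℕ}
    (hf : ContDiff ℝ ((m + ∑ j, α j : ℕ) : WithTop ℕ∞) f) :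
    ContDiff ℝ m (pderivMulti n α f) := by
  rw [pderivMulti_eq_Dl]
  exact contDiff_Dl _ (by rwa [length_listOf])

lemma pderivMulti_zero {n : ℕ} (f : EuclideanSpace ℝ (Fin n) → ℝ) :
    pderivMulti n (fun _ => 0) f = f := by
  rw [pderivMulti_eq_Dl]
  have : listOf n (fun _ => 0) = [] := by simp [listOf]
  rw [this]; rfl

open Polynomial in
lemma iteratedDeriv_polyEval (Q : Polynomial ℝ) (j : ℕ) :
    iteratedDeriv j (fun t => Q.eval t) = fun t => (derivative^[j] Q).eval t := by
  induction j generalizing Q with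
  | zero => simp
  | succ j ih =>
      rw [iteratedDeriv_succ']
      have : deriv (fun t => Q.eval t) = fun t => (derivative Q).eval t := by
        funext t; exact Polynomial.deriv (p := Q)
      rw [this, ih, Function.iterate_succ_apply]

lemma euclid_decomp {n : ℕ} (w : EuclideanSpace ℝ (Fin n)) :
    ∑ i, w i • EuclideanSpace.single i (1 : ℝ) = w := by
  ext j
  simp only [PiLp.smul_apply, EuclideanSpace.single_apply, smul_eq_mul]
  rw [WithLp.ofLp_sum, Finset.sum_apply]
  simp [Finset.sum_ite_eq' Finset.univ j w]

open Polynomial in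
lemma hasDerivAt_comp_omega {n : ℕ} (P : Fin n → Polynomial ℝ)
    (ω : ℝ → EuclideanSpace ℝ (Fin n)) (hωdef : ∀ t i, ω t i = (P i).eval t)
    (G : EuclideanSpace ℝ (Fin n) → ℝ) (t : ℝ) (hG : DifferentiableAt ℝ G (ω t)) :
    HasDerivAt (fun u => G (ω u))
      (∑ i, pderivE n i G (ω t) * (derivative (P i)).eval t) t := by
  set e := EuclideanSpace.equiv (Fin n) ℝ with he
  have hωeq : ω = fun u => e.symm (fun i => (P i).eval u) := by
    funext u; ext i
    rw [hωdef u i]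
    rfl
  set v : EuclideanSpace ℝ (Fin n) := e.symm (fun i => (derivative (P i)).eval t) with hv
  have h1 : HasDerivAt (fun u => (fun i => (P i).eval u : Fin n → ℝ))
      (fun i => (derivative (P i)).eval t) t :=
    hasDerivAt_pi.mpr (fun i => (P i).hasDerivAt t)
  have h2 : HasDerivAt ω v t := by
    rw [hωeq]
    exact (e.symm.toContinuousLinearMap.hasFDerivAt.comp_hasDerivAt t h1)
  have h3 := hG.hasFDerivAt.comp_hasDerivAt t h2
  have hcoord : ∀ i, v i = (derivative (P i)).eval t := fun i => rfl
  have h4 : fderiv ℝ G (ω t) v = ∑ i, pderivE n i G (ω t) * (derivative (P i)).eval t := by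
    conv_lhs => rw [← euclid_decomp v]
    rw [map_sum]
    refine Finset.sum_congr rfl fun i _ => ?_
    rw [map_smul, hcoord i, smul_eq_mul, mul_comm]
    rfl
  rw [← h4]
  exact h3

open Polynomial

/-- index set of pairs (coordinate, derivative order) -/
def idxSet (n d : ℕ) : Finset (Fin n × ℕ) := Finset.univ ×ˢ Finset.Icc 1 (d + 1)

noncomputable def Wp {n : ℕ} (P : Fin n → Polynomial ℝ) (x : Fin n × ℕ) (t : ℝ) : ℝ :=
  (derivative^[x.2] (P x.1)).eval t

noncomputable def Mon (n d : ℕ) (P : Fin n → Polynomial ℝ) (m : Fin n → ℕ → ℕ) (t : ℝ) : ℝ :=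
  ∏ x ∈ idxSet n d, (Wp P x t) ^ (m x.1 x.2)

def bump {n : ℕ} (x : Fin n × ℕ) (m : Fin n → ℕ → ℕ) : Fin n → ℕ → ℕ :=
  fun i j => if i = x.1 ∧ j = x.2 then m i j + 1 else m i j

def dropIdx {n : ℕ} (x : Fin n × ℕ) (m : Fin n → ℕ → ℕ) : Fin n → ℕ → ℕ :=
  fun i j => if i = x.1 ∧ j = x.2 then m i j - 1 else m i j

def stepA {n : ℕ} (i : Fin n) (p : (Fin n → ℕ) × (Fin n → ℕ → ℕ)) :
    (Fin n → ℕ) × (Fin n → ℕ → ℕ) :=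
  (Function.update p.1 i (p.1 i + 1), bump (i, 1) p.2)

def stepS {n : ℕ} (x : Fin n × ℕ) (p : (Fin n → ℕ) × (Fin n → ℕ → ℕ)) :
    (Fin n → ℕ) × (Fin n → ℕ → ℕ) :=
  (p.1, bump (x.1, x.2 + 1) (dropIdx x p.2))

def InvK (n d k : ℕ) (p : (Fin n → ℕ) × (Fin n → ℕ → ℕ)) : Prop :=
  (∀ i, ∑ j ∈ Finset.Icc 1 (d + 1), p.2 i j = p.1 i) ∧
    (∑ i, ∑ j ∈ Finset.Icc 1 (d + 1), j * p.2 i j = k)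

noncomputable def TermF (n d : ℕ) (f : EuclideanSpace ℝ (Fin n) → ℝ)
    (ω : ℝ → EuclideanSpace ℝ (Fin n)) (p : (Fin n → ℕ) × (Fin n → ℕ → ℕ)) (t : ℝ) : ℝ :=
  pderivMulti n p.1 f (ω t) *
    ∏ i, ∏ j ∈ Finset.Icc 1 (d + 1), (iteratedDeriv j (fun u => ω u i) t) ^ (p.2 i j)

lemma mem_idxSet {n d : ℕ} {x : Fin n × ℕ} : x ∈ idxSet n d ↔ 1 ≤ x.2 ∧ x.2 ≤ d + 1 := by
  simp [idxSet, Finset.mem_product]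

lemma Term_eq_Mon {n d : ℕ} {f : EuclideanSpace ℝ (Fin n) → ℝ} {P : Fin n → Polynomial ℝ}
    {ω : ℝ → EuclideanSpace ℝ (Fin n)} (hωdef : ∀ t i, ω t i = (P i).eval t)
    (p : (Fin n → ℕ) × (Fin n → ℕ → ℕ)) (t : ℝ) :
    TermF n d f ω p t = pderivMulti n p.1 f (ω t) * Mon n d P p.2 t := by
  unfold TermF Mon idxSet
  rw [Finset.prod_product]
  congr 1
  refine Finset.prod_congr rfl fun i _ => Finset.prod_congr rfl fun j _ => ?_
  have : (fun u => ω u i) = fun u => (P i).eval u := funext fun u => hωdef u i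
  rw [this, iteratedDeriv_polyEval]
  rfl

lemma bump_self {n : ℕ} (x : Fin n × ℕ) (m : Fin n → ℕ → ℕ) :
    bump x m x.1 x.2 = m x.1 x.2 + 1 := by simp [bump]

lemma bump_ne {n : ℕ} {x : Fin n × ℕ} {i : Fin n} {j : ℕ} (h : (i, j) ≠ x)
    (m : Fin n → ℕ → ℕ) : bump x m i j = m i j := by
  have : ¬(i = x.1 ∧ j = x.2) := by
    rintro ⟨h1, h2⟩; exact h (Prod.ext h1 h2)
  simp [bump, this]

lemma row_sum_bump {n d : ℕ} (x : Fin n × ℕ) (hx : x ∈ idxSet n d) (m : Fin n → ℕ → ℕ)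
    (i : Fin n) (g : ℕ → ℕ → ℕ) (c : ℕ)
    (hg : g x.2 (m x.1 x.2 + 1) = g x.2 (m x.1 x.2) + c) :
    ∑ j ∈ Finset.Icc 1 (d + 1), g j (bump x m i j)
      = (∑ j ∈ Finset.Icc 1 (d + 1), g j (m i j)) + (if i = x.1 then c else 0) := by
  rcases mem_idxSet.mp hx with ⟨h1, h2⟩
  have hx2 : x.2 ∈ Finset.Icc 1 (d + 1) := Finset.mem_Icc.mpr ⟨h1, h2⟩
  by_cases h : i = x.1
  · subst h
    rw [← Finset.add_sum_erase _ (fun j => g j (bump x m x.1 j)) hx2,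
        ← Finset.add_sum_erase _ (fun j => g j (m x.1 j)) hx2]
    have he : ∀ j ∈ (Finset.Icc 1 (d + 1)).erase x.2,
        g j (bump x m x.1 j) = g j (m x.1 j) := by
      intro j hj
      rw [bump_ne (fun hc => (Finset.mem_erase.mp hj).1 (congrArg Prod.snd hc)) m]
    have hs : bump x m x.1 x.2 = m x.1 x.2 + 1 := by simp [bump]
    rw [Finset.sum_congr rfl he, hs, hg]
    simp only [if_pos trivial, eq_self_iff_true, if_true]
    omega
  · have hb : ∀ j, bump x m i j = m i j :=
      fun j => bump_ne (fun hc => h (congrArg Prod.fst hc)) m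
    simp [hb, h]

lemma sum_split2 {s : Finset ℕ} {a b : ℕ} (hab : a ≠ b) (ha : a ∈ s) (hb : b ∈ s)
    (h : ℕ → ℕ) :
    ∑ j ∈ s, h j = h a + h b + ∑ j ∈ (s.erase a).erase b, h j := by
  rw [← Finset.add_sum_erase _ h ha,
      ← Finset.add_sum_erase _ h (Finset.mem_erase.mpr ⟨Ne.symm hab, hb⟩)]
  ring

lemma row_sum_shift {n d : ℕ} (x : Fin n × ℕ) (hx : x ∈ idxSet n d) (hx2' : x.2 + 1 ≤ d + 1)
    (m : Fin n → ℕ → ℕ) (i : Fin n) (g : ℕ → ℕ → ℕ) (c : ℕ)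
    (hg : g x.2 (m x.1 x.2 - 1) + g (x.2 + 1) (m x.1 (x.2 + 1) + 1)
      = g x.2 (m x.1 x.2) + g (x.2 + 1) (m x.1 (x.2 + 1)) + c) :
    ∑ j ∈ Finset.Icc 1 (d + 1), g j (bump (x.1, x.2 + 1) (dropIdx x m) i j)
      = (∑ j ∈ Finset.Icc 1 (d + 1), g j (m i j)) + (if i = x.1 then c else 0) := by
  rcases mem_idxSet.mp hx with ⟨h1, h2⟩
  have hxm : x.2 ∈ Finset.Icc 1 (d + 1) := Finset.mem_Icc.mpr ⟨h1, h2⟩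
  have hxm' : x.2 + 1 ∈ Finset.Icc 1 (d + 1) := Finset.mem_Icc.mpr ⟨by omega, hx2'⟩
  have hne : x.2 ≠ x.2 + 1 := by omega
  by_cases h : i = x.1
  · subst h
    rw [sum_split2 hne hxm hxm' (fun j => g j (bump (x.1, x.2 + 1) (dropIdx x m) x.1 j)),
        sum_split2 hne hxm hxm' (fun j => g j (m x.1 j))]
    have v1 : bump (x.1, x.2 + 1) (dropIdx x m) x.1 x.2 = m x.1 x.2 - 1 := by
      simp [bump, dropIdx, hne]
    have v2 : bump (x.1, x.2 + 1) (dropIdx x m) x.1 (x.2 + 1) = m x.1 (x.2 + 1) + 1 := by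
      simp [bump, dropIdx, Ne.symm hne]
    have he : ∀ j ∈ ((Finset.Icc 1 (d + 1)).erase x.2).erase (x.2 + 1),
        g j (bump (x.1, x.2 + 1) (dropIdx x m) x.1 j) = g j (m x.1 j) := by
      intro j hj
      rcases Finset.mem_erase.mp hj with ⟨hj1, hj2⟩
      rcases Finset.mem_erase.mp hj2 with ⟨hj3, _⟩
      have : bump (x.1, x.2 + 1) (dropIdx x m) x.1 j = m x.1 j := by
        simp [bump, dropIdx, hj1, hj3]
      rw [this]
    rw [Finset.sum_congr rfl he, v1, v2, hg]
    simp only [if_pos trivial, eq_self_iff_true, if_true]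
    omega
  · have hb : ∀ j, bump (x.1, x.2 + 1) (dropIdx x m) i j = m i j := by
      intro j; simp [bump, dropIdx, h]
    simp [hb, h]

lemma mem_one_idxSet {n d : ℕ} (i : Fin n) : ((i, 1) : Fin n × ℕ) ∈ idxSet n d :=
  mem_idxSet.mpr ⟨le_refl 1, by omega⟩

lemma alpha_le {n d k : ℕ} (p : (Fin n → ℕ) × (Fin n → ℕ → ℕ)) (hp : InvK n d k p) :
    ∑ i, p.1 i ≤ k := by
  rcases hp with ⟨hrow, hw⟩
  calc ∑ i, p.1 i = ∑ i, ∑ j ∈ Finset.Icc 1 (d + 1), p.2 i j := by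
        exact Finset.sum_congr rfl fun i _ => (hrow i).symm
    _ ≤ ∑ i, ∑ j ∈ Finset.Icc 1 (d + 1), j * p.2 i j := by
        refine Finset.sum_le_sum fun i _ => Finset.sum_le_sum fun j hj => ?_
        have : 1 ≤ j := (Finset.mem_Icc.mp hj).1
        exact Nat.le_mul_of_pos_left _ (by omega)
    _ = k := hw

lemma idx_le {n d k : ℕ} (p : (Fin n → ℕ) × (Fin n → ℕ → ℕ)) (hp : InvK n d k p)
    (x : Fin n × ℕ) (hx : x ∈ idxSet n d) (hm : p.2 x.1 x.2 ≠ 0) : x.2 ≤ k := by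
  rcases hp with ⟨_, hw⟩
  have hxm : x.2 ∈ Finset.Icc 1 (d + 1) := by
    rcases mem_idxSet.mp hx with ⟨h1, h2⟩; exact Finset.mem_Icc.mpr ⟨h1, h2⟩
  have h1 : x.2 * p.2 x.1 x.2 ≤ ∑ j ∈ Finset.Icc 1 (d + 1), j * p.2 x.1 j :=
    Finset.single_le_sum (f := fun j => j * p.2 x.1 j) (fun _ _ => Nat.zero_le _) hxm
  have h2 : (∑ j ∈ Finset.Icc 1 (d + 1), j * p.2 x.1 j)
      ≤ ∑ i, ∑ j ∈ Finset.Icc 1 (d + 1), j * p.2 i j :=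
    Finset.single_le_sum (f := fun i => ∑ j ∈ Finset.Icc 1 (d + 1), j * p.2 i j)
      (fun _ _ => Nat.zero_le _) (Finset.mem_univ x.1)
  have h3 : x.2 ≤ x.2 * p.2 x.1 x.2 := Nat.le_mul_of_pos_right _ (Nat.pos_of_ne_zero hm)
  omega

lemma invK_stepA {n d k : ℕ} (i : Fin n) (p : (Fin n → ℕ) × (Fin n → ℕ → ℕ))
    (hp : InvK n d k p) : InvK n d (k + 1) (stepA i p) := by
  rcases hp with ⟨hrow, hw⟩
  constructor
  · intro i'
    show ∑ j ∈ Finset.Icc 1 (d + 1), bump (i, 1) p.2 i' j = Function.update p.1 i (p.1 i + 1) i'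
    rw [row_sum_bump (i, 1) (mem_one_idxSet i) p.2 i' (fun _ v => v) 1 rfl, hrow i',
      Function.update_apply]
    by_cases h : i' = i <;> simp [h]
  · show ∑ i', ∑ j ∈ Finset.Icc 1 (d + 1), j * bump (i, 1) p.2 i' j = k + 1
    have : ∀ i', ∑ j ∈ Finset.Icc 1 (d + 1), j * bump (i, 1) p.2 i' j
        = (∑ j ∈ Finset.Icc 1 (d + 1), j * p.2 i' j) + (if i' = i then 1 else 0) := by
      intro i'
      exact row_sum_bump (i, 1) (mem_one_idxSet i) p.2 i' (fun j v => j * v) 1 (by dsimp only; omega)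
    rw [Finset.sum_congr rfl fun i' _ => this i', Finset.sum_add_distrib, hw,
      Finset.sum_ite_eq' Finset.univ i (fun _ => 1)]
    simp

lemma invK_stepS {n d k : ℕ} (x : Fin n × ℕ) (hx : x ∈ idxSet n d)
    (p : (Fin n → ℕ) × (Fin n → ℕ → ℕ)) (hm : p.2 x.1 x.2 ≠ 0) (hk : k ≤ d)
    (hp : InvK n d k p) : InvK n d (k + 1) (stepS x p) := by
  have hx2' : x.2 + 1 ≤ d + 1 := by
    have := idx_le p hp x hx hm; omega
  have hm1 : 1 ≤ p.2 x.1 x.2 := Nat.pos_of_ne_zero hm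
  rcases hp with ⟨hrow, hw⟩
  constructor
  · intro i
    show ∑ j ∈ Finset.Icc 1 (d + 1), bump (x.1, x.2 + 1) (dropIdx x p.2) i j = p.1 i
    rw [row_sum_shift x hx hx2' p.2 i (fun _ v => v) 0 (by omega), hrow i]
    simp
  · show ∑ i, ∑ j ∈ Finset.Icc 1 (d + 1), j * bump (x.1, x.2 + 1) (dropIdx x p.2) i j = k + 1
    have hg : x.2 * (p.2 x.1 x.2 - 1) + (x.2 + 1) * (p.2 x.1 (x.2 + 1) + 1)
        = x.2 * p.2 x.1 x.2 + (x.2 + 1) * p.2 x.1 (x.2 + 1) + 1 := by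
      obtain ⟨u, hu⟩ : ∃ u, p.2 x.1 x.2 = u + 1 := ⟨p.2 x.1 x.2 - 1, by omega⟩
      rw [hu]; simp only [Nat.add_sub_cancel]; ring
    have : ∀ i, ∑ j ∈ Finset.Icc 1 (d + 1), j * bump (x.1, x.2 + 1) (dropIdx x p.2) i j
        = (∑ j ∈ Finset.Icc 1 (d + 1), j * p.2 i j) + (if i = x.1 then 1 else 0) :=
      fun i => row_sum_shift x hx hx2' p.2 i (fun j v => j * v) 1 hg
    rw [Finset.sum_congr rfl fun i _ => this i, Finset.sum_add_distrib, hw,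
      Finset.sum_ite_eq' Finset.univ x.1 (fun _ => 1)]
    simp

lemma Mon_bump {n d : ℕ} (P : Fin n → Polynomial ℝ) {x : Fin n × ℕ} (hx : x ∈ idxSet n d)
    (m : Fin n → ℕ → ℕ) (t : ℝ) :
    Mon n d P (bump x m) t = Wp P x t * Mon n d P m t := by
  unfold Mon
  rw [← Finset.mul_prod_erase _ _ hx, ← Finset.mul_prod_erase _ (fun y => (Wp P y t) ^ (m y.1 y.2)) hx]
  have he : ∀ y ∈ (idxSet n d).erase x,
      (Wp P y t) ^ (bump x m y.1 y.2) = (Wp P y t) ^ (m y.1 y.2) := by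
    intro y hy
    rw [bump_ne (by simpa using (Finset.mem_erase.mp hy).1) m]
  rw [Finset.prod_congr rfl he, bump_self, pow_succ]
  ring

lemma hasDerivAt_Wp {n : ℕ} (P : Fin n → Polynomial ℝ) (x : Fin n × ℕ) (t : ℝ) :
    HasDerivAt (fun t => Wp P x t) (Wp P (x.1, x.2 + 1) t) t := by
  unfold Wp
  simpa [Function.iterate_succ_apply'] using
    (Polynomial.hasDerivAt (p := derivative^[x.2] (P x.1)) t)

lemma hasDerivAt_Mon {n d : ℕ} (P : Fin n → Polynomial ℝ) (m : Fin n → ℕ → ℕ) (t : ℝ) :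
    HasDerivAt (Mon n d P m)
      (∑ x ∈ idxSet n d, (∏ y ∈ (idxSet n d).erase x, (Wp P y t) ^ (m y.1 y.2)) •
        ((m x.1 x.2 : ℝ) * (Wp P x t) ^ (m x.1 x.2 - 1) * Wp P (x.1, x.2 + 1) t)) t := by
  have h : ∀ x ∈ idxSet n d, HasDerivAt (fun t => (Wp P x t) ^ (m x.1 x.2))
      ((m x.1 x.2 : ℝ) * (Wp P x t) ^ (m x.1 x.2 - 1) * Wp P (x.1, x.2 + 1) t) t :=
    fun x _ => (hasDerivAt_Wp P x t).pow _
  exact HasDerivAt.fun_finsetProd h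

lemma Mon_shift {n d : ℕ} (P : Fin n → Polynomial ℝ) {x : Fin n × ℕ} (hx : x ∈ idxSet n d)
    (hx' : (x.1, x.2 + 1) ∈ idxSet n d) (m : Fin n → ℕ → ℕ) (hm : 1 ≤ m x.1 x.2) (t : ℝ) :
    (∏ y ∈ (idxSet n d).erase x, (Wp P y t) ^ (m y.1 y.2)) *
        ((m x.1 x.2 : ℝ) * (Wp P x t) ^ (m x.1 x.2 - 1) * Wp P (x.1, x.2 + 1) t)
      = (m x.1 x.2 : ℝ) * Mon n d P (bump (x.1, x.2 + 1) (dropIdx x m)) t := by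
  set x' : Fin n × ℕ := (x.1, x.2 + 1) with hx'def
  have hxx' : x' ≠ x := by
    simp only [hx'def, Ne, Prod.ext_iff]; omega
  have hx'e : x' ∈ (idxSet n d).erase x := Finset.mem_erase.mpr ⟨hxx', hx'⟩
  rw [← Finset.mul_prod_erase _ (fun y => (Wp P y t) ^ (m y.1 y.2)) hx'e]
  unfold Mon
  rw [← Finset.mul_prod_erase _ (fun y => (Wp P y t) ^ (bump x' (dropIdx x m) y.1 y.2)) hx,
    ← Finset.mul_prod_erase _ (fun y => (Wp P y t) ^ (bump x' (dropIdx x m) y.1 y.2)) hx'e]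
  have he : ∀ y ∈ ((idxSet n d).erase x).erase x',
      (Wp P y t) ^ (bump x' (dropIdx x m) y.1 y.2) = (Wp P y t) ^ (m y.1 y.2) := by
    intro y hy
    rcases Finset.mem_erase.mp hy with ⟨hy1, hy2⟩
    rcases Finset.mem_erase.mp hy2 with ⟨hy3, _⟩
    have e1 : bump x' (dropIdx x m) y.1 y.2 = dropIdx x m y.1 y.2 :=
      bump_ne (by simpa using hy1) _
    have e2 : dropIdx x m y.1 y.2 = m y.1 y.2 := by
      have : ¬(y.1 = x.1 ∧ y.2 = x.2) := by
        rintro ⟨a, b⟩; exact hy3 (Prod.ext a b)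
      simp [dropIdx, this]
    rw [e1, e2]
  rw [Finset.prod_congr rfl he]
  have v1 : bump x' (dropIdx x m) x.1 x.2 = m x.1 x.2 - 1 := by
    have h1 : bump x' (dropIdx x m) x.1 x.2 = dropIdx x m x.1 x.2 := by
      have : ¬(x.1 = x'.1 ∧ x.2 = x'.2) := by simp [hx'def]
      simp [bump, this]
    rw [h1]; simp [dropIdx]
  have v2 : bump x' (dropIdx x m) x'.1 x'.2 = m x'.1 x'.2 + 1 := by
    have h1 : dropIdx x m x'.1 x'.2 = m x'.1 x'.2 := by
      have : ¬(x'.1 = x.1 ∧ x'.2 = x.2) := by simp [hx'def]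
      simp [dropIdx, this]
    simp [bump, h1]
  rw [v1, v2, pow_succ]
  ring

lemma hasDerivAt_TermF {n d : ℕ} {f : EuclideanSpace ℝ (Fin n) → ℝ}
    (hf : ContDiff ℝ (((d + 1 : ℕ)) : WithTop ℕ∞) f)
    {P : Fin n → Polynomial ℝ} {ω : ℝ → EuclideanSpace ℝ (Fin n)}
    (hωdef : ∀ t i, ω t i = (P i).eval t) {k : ℕ} (hk : k ≤ d)
    (p : (Fin n → ℕ) × (Fin n → ℕ → ℕ)) (hp : InvK n d k p) (t : ℝ) :
    HasDerivAt (fun t => TermF n d f ω p t)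
      (∑ i, TermF n d f ω (stepA i p) t
        + ∑ x ∈ idxSet n d, (p.2 x.1 x.2 : ℝ) * TermF n d f ω (stepS x p) t) t := by
  have halpha : ∑ i, p.1 i ≤ k := alpha_le p hp
  set G := pderivMulti n p.1 f with hG
  have hGC : ContDiff ℝ (1 : ℕ) G := by
    apply contDiff_pderivMulti
    apply hf.of_le
    have : (1 + ∑ j, p.1 j) ≤ d + 1 := by omega
    exact_mod_cast this
  have hTermEq : (fun t => TermF n d f ω p t) = fun t => G (ω t) * Mon n d P p.2 t :=
    funext fun t => Term_eq_Mon hωdef p t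
  rw [hTermEq]
  have hchain := hasDerivAt_comp_omega P ω hωdef G t
    ((hGC.differentiable (by simp)) (ω t))
  have hmon := hasDerivAt_Mon (d := d) P p.2 t
  have hmul := hchain.mul hmon
  refine hmul.congr_deriv ?_; symm
  congr 1
  · -- chain-rule part:  ∑ i, TermF (stepA i p) = (∑ i, ∂ᵢG(ω t) * P'ᵢ(t)) * Mon
    rw [Finset.sum_mul]
    refine Finset.sum_congr rfl fun i _ => ?_
    have h1 : TermF n d f ω (stepA i p) t
        = pderivMulti n (Function.update p.1 i (p.1 i + 1)) f (ω t)
          * Mon n d P (bump (i, 1) p.2) t := Term_eq_Mon hωdef _ t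
    rw [h1, pderivMulti_succ i (hf.of_le (by exact_mod_cast (by omega : (∑ j, p.1 j) + 1 ≤ d + 1))),
      Mon_bump P (mem_one_idxSet i) p.2 t]
    have hW1 : Wp P (i, 1) t = (derivative (P i)).eval t := by
      simp [Wp]
    rw [hW1]
    ring
  · -- product-rule part
    rw [Finset.mul_sum]
    refine Finset.sum_congr rfl fun x hx => ?_
    by_cases hm : p.2 x.1 x.2 = 0
    · simp [hm]
    · have hx2' : (x.1, x.2 + 1) ∈ idxSet n d := by
        have := idx_le p hp x hx hm
        exact mem_idxSet.mpr ⟨by omega, by omega⟩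
      have h1 : TermF n d f ω (stepS x p) t
          = G (ω t) * Mon n d P (bump (x.1, x.2 + 1) (dropIdx x p.2)) t :=
        Term_eq_Mon hωdef _ t
      have h2 := Mon_shift P hx hx2' p.2 (Nat.pos_of_ne_zero hm) t
      rw [h1, smul_eq_mul]
      linear_combination (-(G (ω t))) * h2

noncomputable def EvalT (n d : ℕ) (f : EuclideanSpace ℝ (Fin n) → ℝ)
    (ω : ℝ → EuclideanSpace ℝ (Fin n)) (t : ℝ) :
    ((((Fin n → ℕ) × (Fin n → ℕ → ℕ))) →₀ ℤ) →ₗ[ℤ] ℝ :=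
  Finsupp.linearCombination ℤ (fun p => TermF n d f ω p t)

lemma EvalT_apply {n d : ℕ} (f : EuclideanSpace ℝ (Fin n) → ℝ)
    (ω : ℝ → EuclideanSpace ℝ (Fin n)) (t : ℝ)
    (q : (((Fin n → ℕ) × (Fin n → ℕ → ℕ))) →₀ ℤ) :
    EvalT n d f ω t q = ∑ p ∈ q.support, (q p : ℝ) * TermF n d f ω p t := by
  rw [EvalT, Finsupp.linearCombination_apply, Finsupp.sum]
  exact Finset.sum_congr rfl fun p _ => zsmul_eq_mul _ _

noncomputable def stepFinsupp (n d : ℕ) (p : (Fin n → ℕ) × (Fin n → ℕ → ℕ)) :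
    (((Fin n → ℕ) × (Fin n → ℕ → ℕ))) →₀ ℤ :=
  (∑ i, Finsupp.single (stepA i p) (1 : ℤ))
    + ∑ x ∈ idxSet n d, Finsupp.single (stepS x p) (p.2 x.1 x.2 : ℤ)

lemma EvalT_stepFinsupp {n d : ℕ} (f : EuclideanSpace ℝ (Fin n) → ℝ)
    (ω : ℝ → EuclideanSpace ℝ (Fin n)) (t : ℝ) (p : (Fin n → ℕ) × (Fin n → ℕ → ℕ)) :
    EvalT n d f ω t (stepFinsupp n d p)
      = ∑ i, TermF n d f ω (stepA i p) t
        + ∑ x ∈ idxSet n d, (p.2 x.1 x.2 : ℝ) * TermF n d f ω (stepS x p) t := by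
  rw [stepFinsupp, map_add, map_sum, map_sum]
  congr 1
  · refine Finset.sum_congr rfl fun i _ => ?_
    rw [EvalT, Finsupp.linearCombination_single]
    simp
  · refine Finset.sum_congr rfl fun x _ => ?_
    rw [EvalT, Finsupp.linearCombination_single]
    simp [zsmul_eq_mul]

lemma stepFinsupp_support {n d : ℕ} (p p' : (Fin n → ℕ) × (Fin n → ℕ → ℕ))
    (h : p' ∈ (stepFinsupp n d p).support) :

    (∃ i, p' = stepA i p) ∨
      (∃ x ∈ idxSet n d, p.2 x.1 x.2 ≠ 0 ∧ p' = stepS x p) := by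
  classical
  rcases Finset.mem_union.mp (Finsupp.support_add h) with h1 | h2
  · rcases Finsupp.mem_support_finset_sum p' h1 with ⟨i, _, hi⟩
    left
    exact ⟨i, (Finsupp.mem_support_single p' _ _).mp hi |>.1⟩
  · rcases Finsupp.mem_support_finset_sum p' h2 with ⟨x, hx, hx2⟩
    right
    rcases (Finsupp.mem_support_single p' _ _).mp hx2 with ⟨he, hne⟩
    exact ⟨x, hx, by exact_mod_cast hne, he⟩

lemma expansion {n d : ℕ} {f : EuclideanSpace ℝ (Fin n) → ℝ}
    (hf : ContDiff ℝ (((d + 1 : ℕ)) : WithTop ℕ∞) f)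
    {P : Fin n → Polynomial ℝ} {ω : ℝ → EuclideanSpace ℝ (Fin n)}
    (hωdef : ∀ t i, ω t i = (P i).eval t) :
    ∀ k, k ≤ d + 1 → ∃ q : (((Fin n → ℕ) × (Fin n → ℕ → ℕ))) →₀ ℤ,
      (∀ p ∈ q.support, InvK n d k p) ∧
      ∀ t, iteratedDeriv k (fun u => f (ω u)) t = EvalT n d f ω t q := by
  classical
  intro k
  induction k with
  | zero =>
      intro _
      refine ⟨Finsupp.single (fun _ => 0, fun _ _ => 0) 1, ?_, ?_⟩
      · intro p hp
        rw [Finsupp.support_single_ne_zero _ one_ne_zero, Finset.mem_singleton] at hp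
        subst hp
        constructor <;> simp [InvK]
      · intro t
        rw [EvalT, Finsupp.linearCombination_single, iteratedDeriv_zero]
        show f (ω t) = (1 : ℤ) • TermF n d f ω (fun _ => 0, fun _ _ => 0) t
        rw [one_smul, TermF]
        simp [pderivMulti_zero]
  | succ k ih =>
      intro hk1
      obtain ⟨q, hqInv, hqEq⟩ := ih (by omega)
      have hkd : k ≤ d := by omega
      refine ⟨q.sum fun p c => c • stepFinsupp n d p, ?_, ?_⟩
      · intro p' hp'
        obtain ⟨p, hpq, hp'2⟩ := Finset.mem_biUnion.mp (Finsupp.support_sum hp')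
        have hp'3 : p' ∈ (stepFinsupp n d p).support :=
          Finset.mem_of_subset Finsupp.support_smul hp'2
        rcases stepFinsupp_support p p' hp'3 with ⟨i, rfl⟩ | ⟨x, hx, hne, rfl⟩
        · exact invK_stepA i p (hqInv p hpq)
        · exact invK_stepS x hx p hne hkd (hqInv p hpq)
      · intro t
        rw [iteratedDeriv_succ]
        have hfun : iteratedDeriv k (fun u => f (ω u))
            = fun t => ∑ p ∈ q.support, (q p : ℝ) * TermF n d f ω p t := by
          funext t; rw [hqEq t, EvalT_apply]
        rw [hfun]
        have hder : HasDerivAt (fun t => ∑ p ∈ q.support, (q p : ℝ) * TermF n d f ω p t)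
            (∑ p ∈ q.support, (q p : ℝ) *
              (∑ i, TermF n d f ω (stepA i p) t
                + ∑ x ∈ idxSet n d, (p.2 x.1 x.2 : ℝ) * TermF n d f ω (stepS x p) t)) t := by
          refine HasDerivAt.fun_sum fun p hp => ?_
          exact (hasDerivAt_TermF hf hωdef hkd p (hqInv p hp) t).const_mul _
        rw [hder.deriv]
        rw [Finsupp.sum, map_sum]
        refine Finset.sum_congr rfl fun p hp => ?_
        rw [map_smul, EvalT_stepFinsupp]
        rw [zsmul_eq_mul]

theorem chain_rule_low_order_terms_vanish
    (n d s : ℕ) (f : EuclideanSpace ℝ (Fin n) → ℝ) (hf : ContDiff ℝ (d + 1) f)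
    (P : Fin n → Polynomial ℝ) (hdeg : ∀ i, (P i).natDegree ≤ s)
    (ω : ℝ → EuclideanSpace ℝ (Fin n)) (hωdef : ∀ t i, ω t i = (P i).eval t)
    (hball : ∀ t ∈ Set.Icc (-1 : ℝ) 1,
      ω t ∈ Metric.closedBall (0 : EuclideanSpace ℝ (Fin n)) 1) :
    ∃ (S : Finset ((Fin n → ℕ) × (Fin n → ℕ → ℕ)))
      (c : (Fin n → ℕ) × (Fin n → ℕ → ℕ) → ℤ),
      (∀ p ∈ S,
        (d + 1) / (s + 1) + 1 ≤ ∑ i, p.1 i ∧ (∑ i, p.1 i) ≤ d + 1 ∧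
        (∀ i, ∑ j ∈ Finset.Icc 1 (d + 1), p.2 i j = p.1 i) ∧
        (∑ i, ∑ j ∈ Finset.Icc 1 (d + 1), j * p.2 i j = d + 1)) ∧
      ∀ t : ℝ,
        iteratedDeriv (d + 1) (fun u => f (ω u)) t =
          ∑ p ∈ S, (c p : ℝ) * pderivMulti n p.1 f (ω t) *
            ∏ i, ∏ j ∈ Finset.Icc 1 (d + 1),
              (iteratedDeriv j (fun u => ω u i) t) ^ (p.2 i j) := by
  classical
  have hf' : ContDiff ℝ (((d + 1 : ℕ)) : WithTop ℕ∞) f := by exact_mod_cast hf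
  obtain ⟨q, hqInv, hqEq⟩ := expansion hf' hωdef (d + 1) le_rfl
  set Good : (Fin n → ℕ) × (Fin n → ℕ → ℕ) → Prop :=
    fun p => ∀ x ∈ idxSet n d, s + 1 ≤ x.2 → p.2 x.1 x.2 = 0 with hGood
  refine ⟨q.support.filter Good, fun p => q p, ?_, ?_⟩
  · intro p hp
    rcases Finset.mem_filter.mp hp with ⟨hps, hpg⟩
    obtain ⟨hrow, hw⟩ := hqInv p hps
    have hA1 : ∑ i, p.1 i ≤ d + 1 := alpha_le p ⟨hrow, hw⟩
    refine ⟨?_, hA1, hrow, hw⟩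
    -- lower bound
    have hle : d + 1 ≤ s * ∑ i, p.1 i := by
      have h1 : ∀ i, ∑ j ∈ Finset.Icc 1 (d + 1), j * p.2 i j
          ≤ ∑ j ∈ Finset.Icc 1 (d + 1), s * p.2 i j := by
        intro i
        refine Finset.sum_le_sum fun j hj => ?_
        by_cases hz : p.2 i j = 0
        · simp [hz]
        · have hjs : j ≤ s := by
            by_contra hcon
            exact hz (hpg (i, j) (mem_idxSet.mpr
              ⟨(Finset.mem_Icc.mp hj).1, (Finset.mem_Icc.mp hj).2⟩) (by omega))
          exact Nat.mul_le_mul_right _ hjs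
      calc d + 1 = ∑ i, ∑ j ∈ Finset.Icc 1 (d + 1), j * p.2 i j := hw.symm
        _ ≤ ∑ i, ∑ j ∈ Finset.Icc 1 (d + 1), s * p.2 i j :=
            Finset.sum_le_sum fun i _ => h1 i
        _ = s * ∑ i, ∑ j ∈ Finset.Icc 1 (d + 1), p.2 i j := by
            rw [Finset.mul_sum]
            exact Finset.sum_congr rfl fun i _ => (Finset.mul_sum _ _ _).symm
        _ = s * ∑ i, p.1 i := by
            congr 1
            exact Finset.sum_congr rfl fun i _ => hrow i
    have hA0 : 1 ≤ ∑ i, p.1 i := by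
      by_contra hcon
      push_neg at hcon
      interval_cases h : (∑ i, p.1 i)
      · have hall : ∀ i, p.1 i = 0 := by
          intro i
          have := Finset.sum_eq_zero_iff.mp h
          exact this i (Finset.mem_univ i)
        have : ∀ i, ∀ j ∈ Finset.Icc 1 (d + 1), p.2 i j = 0 := by
          intro i
          exact Finset.sum_eq_zero_iff.mp ((hrow i).trans (hall i))
        have : (∑ i, ∑ j ∈ Finset.Icc 1 (d + 1), j * p.2 i j) = 0 :=
          Finset.sum_eq_zero fun i _ => Finset.sum_eq_zero fun j hj => by
            rw [this i j hj, mul_zero]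
        omega
    have : d + 1 < (∑ i, p.1 i) * (s + 1) := by
      calc d + 1 ≤ s * ∑ i, p.1 i := hle
        _ < s * ∑ i, p.1 i + ∑ i, p.1 i := by omega
        _ = (∑ i, p.1 i) * (s + 1) := by ring
    have := (Nat.div_lt_iff_lt_mul (by omega : 0 < s + 1)).mpr this
    omega
  · intro t
    rw [hqEq t, EvalT_apply]
    rw [Finset.sum_subset (Finset.filter_subset Good q.support) ?_]
    · exact Finset.sum_congr rfl fun p _ => by rw [mul_assoc]; rfl
    · intro p hps hnp
      rw [Finset.mem_filter] at hnp
      have : ¬ Good p := fun h => hnp ⟨hps, h⟩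
      simp only [hGood] at this
      push_neg at this
      obtain ⟨x, hx, hxs, hxne⟩ := this
      have hvan : iteratedDeriv x.2 (fun u => ω u x.1) t = 0 := by
        have hfn : (fun u => ω u x.1) = fun u => (P x.1).eval u :=
          funext fun u => hωdef u x.1
        rw [hfn, iteratedDeriv_polyEval]
        have : derivative^[x.2] (P x.1) = 0 :=
          Polynomial.iterate_derivative_eq_zero (by have := hdeg x.1; omega)
        simp [this]
      have hprodzero : (∏ i, ∏ j ∈ Finset.Icc 1 (d + 1),
          (iteratedDeriv j (fun u => ω u i) t) ^ (p.2 i j)) = 0 := by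
        apply Finset.prod_eq_zero (Finset.mem_univ x.1)
        apply Finset.prod_eq_zero (i := x.2)
        · rcases mem_idxSet.mp hx with ⟨h1, h2⟩
          exact Finset.mem_Icc.mpr ⟨h1, h2⟩
        · rw [hvan]
          exact zero_pow hxne
      rw [hprodzero]
      ring
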